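/- Let f : ℝ^m → ℝ ∪ {∞} be proper, convex, lsc, λ > 0 and v ∈ ℝ^m. If z* is the proximal point z* = P_λ f(v) (i.e., z* minimizes z ↦ f(z) + (1/(2λ))‖z − v‖²), then the Moreau envelope e_λ f is differentiable at v with ∇e_λ f(v) = (1/λ)(v − z*). -/

import Mathlib

open RealInnerProductSpace

/-- Moreau envelope of an extended-real-valued function. -/
noncomputable def moreau {E : Type*} [NormedAddCommGroup E]
    (lam : ℝ) (f : E → EReal) (v : E) : EReal :=
  ⨅ z : E, f z + ((1 / (2 * lam) * ‖z - v‖ ^ 2 : ℝ) : EReal)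

theorem stmt4 {m : ℕ} (lam : ℝ) (hlam : 0 < lam)
    (f : EuclideanSpace ℝ (Fin m) → EReal)
    (hne_bot : ∀ z, f z ≠ ⊥) (hproper : ∃ z, f z ≠ ⊤)
    (hlsc : LowerSemicontinuous f)
    (hconv : ∀ x y : EuclideanSpace ℝ (Fin m), ∀ a b : ℝ,
      0 ≤ a → 0 ≤ b → a + b = 1 →
      f (a • x + b • y) ≤ (a : EReal) * f x + (b : EReal) * f y)
    (v zstar : EuclideanSpace ℝ (Fin m))
    (hmin : ∀ z, f zstar + ((1 / (2 * lam) * ‖zstar - v‖ ^ 2 : ℝ) : EReal)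
      ≤ f z + ((1 / (2 * lam) * ‖z - v‖ ^ 2 : ℝ) : EReal)) :
    HasGradientAt (fun w => (moreau lam f w).toReal) ((1 / lam) • (v - zstar)) v := by
  obtain ⟨z0, hz0⟩ := hproper
  set g : EuclideanSpace ℝ (Fin m) := (1 / lam) • (v - zstar) with hg
  have h2 : (0:ℝ) < 2 * lam := by linarith
  have hl0 : lam ≠ 0 := ne_of_gt hlam
  -- clearing denominators helper
  have hclear : ∀ a b c d : ℝ, a + 1 / (2 * lam) * b ≤ c + 1 / (2 * lam) * d →
      2 * lam * a + b ≤ 2 * lam * c + d := by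
    intro a b c d h
    have h' := mul_le_mul_of_nonneg_left h (le_of_lt h2)
    have e1 : 2 * lam * (a + 1 / (2 * lam) * b) = 2 * lam * a + b := by
      field_simp
    have e2 : 2 * lam * (c + 1 / (2 * lam) * d) = 2 * lam * c + d := by
      field_simp
    rw [e1, e2] at h'
    exact h'
  -- f zstar is finite
  have hfz_top : f zstar ≠ ⊤ := by
    intro h
    have h1 := hmin z0
    rw [h, EReal.top_add_coe] at h1
    exact (EReal.add_lt_top hz0 (EReal.coe_ne_top _)).not_ge h1
  set M : ℝ := (f zstar).toReal with hM
  have hMeq : f zstar = (M : EReal) := (EReal.coe_toReal hfz_top (hne_bot zstar)).symm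
  -- subgradient inequality (in multiplied-out form)
  have hsub : ∀ z, f z ≠ ⊤ →
      2 * lam * M + 2 * ⟪v - zstar, z - zstar⟫ ≤ 2 * lam * (f z).toReal := by
    intro z hz
    set F : ℝ := (f z).toReal with hF
    have hFeq : f z = (F : EReal) := (EReal.coe_toReal hz (hne_bot z)).symm
    set ip : ℝ := ⟪v - zstar, z - zstar⟫ with hip
    set n : ℝ := ‖z - zstar‖ ^ 2 with hn
    have key : ∀ t : ℝ, 0 < t → t ≤ 1 →
        2 * lam * M + 2 * ip ≤ 2 * lam * F + t * n := by
      intro t ht ht1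
      set zt : EuclideanSpace ℝ (Fin m) := (1 - t) • zstar + t • z with hzt
      have hconv' := hconv zstar z (1 - t) t (by linarith) ht.le (by ring)
      rw [hMeq, hFeq, ← EReal.coe_mul, ← EReal.coe_mul, ← EReal.coe_add] at hconv'
      have hzt_top : f zt ≠ ⊤ := fun h => by
        rw [← hzt, h] at hconv'
        exact absurd (top_le_iff.mp hconv') (EReal.coe_ne_top _)
      set Ft : ℝ := (f zt).toReal with hFt
      have hFteq : f zt = (Ft : EReal) := (EReal.coe_toReal hzt_top (hne_bot zt)).symm
      rw [← hzt, hFteq, EReal.coe_le_coe_iff] at hconv'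
      have hmin' := hmin zt
      rw [hMeq, hFteq, ← EReal.coe_add, ← EReal.coe_add, EReal.coe_le_coe_iff] at hmin'
      have hvec : zt - v = (zstar - v) + t • (z - zstar) := by
        rw [hzt]; module
      have hip' : ⟪zstar - v, z - zstar⟫ = -ip := by
        rw [hip, ← inner_neg_left]; congr 1; abel
      have hnorm : ‖zt - v‖ ^ 2 = ‖zstar - v‖ ^ 2 + 2 * (t * (-ip)) + t ^ 2 * n := by
        rw [hvec, norm_add_sq_real, real_inner_smul_right, norm_smul,
          Real.norm_eq_abs, mul_pow, sq_abs, hip', hn]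
      rw [hnorm] at hmin'
      have h3 := hclear _ _ _ _ hmin'
      nlinarith [h3, mul_le_mul_of_nonneg_left hconv' (le_of_lt h2), ht]
    -- take t → 0
    by_contra hcon
    push_neg at hcon
    set ε : ℝ := 2 * lam * M + 2 * ip - 2 * lam * F with hε
    have hεpos : 0 < ε := by rw [hε]; linarith
    have hnn : (0:ℝ) ≤ n := by rw [hn]; positivity
    set t : ℝ := min 1 (ε / (n + 1)) with htdef
    have htpos : 0 < t := lt_min one_pos (by positivity)
    have ht1 : t ≤ 1 := min_le_left _ _
    have ht2 : t ≤ ε / (n + 1) := min_le_right _ _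
    have h5 : t * n ≤ ε / (n + 1) * n := mul_le_mul_of_nonneg_right ht2 hnn
    have h6 : ε / (n + 1) * n < ε := by
      rw [div_mul_eq_mul_div, div_lt_iff₀ (by positivity : (0:ℝ) < n + 1)]
      nlinarith
    linarith [key t htpos ht1]
  -- the envelope value at v
  set ev : ℝ := M + 1 / (2 * lam) * ‖zstar - v‖ ^ 2 with hev
  clear_value g M ev
  -- upper bound
  have hupper : ∀ w, moreau lam f w
      ≤ ((ev + ⟪g, w - v⟫ + 1 / (2 * lam) * ‖w - v‖ ^ 2 : ℝ) : EReal) := by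
    intro w
    have h1 : moreau lam f w ≤ f zstar + ((1 / (2 * lam) * ‖zstar - w‖ ^ 2 : ℝ) : EReal) :=
      iInf_le _ zstar
    have heq : M + 1 / (2 * lam) * ‖zstar - w‖ ^ 2
        = ev + ⟪g, w - v⟫ + 1 / (2 * lam) * ‖w - v‖ ^ 2 := by
      have hvec : zstar - w = (zstar - v) - (w - v) := by module
      have hnorm : ‖zstar - w‖ ^ 2 = ‖zstar - v‖ ^ 2 - 2 * ⟪zstar - v, w - v⟫
          + ‖w - v‖ ^ 2 := by
        rw [hvec, norm_sub_sq_real]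
      have hipg : ⟪g, w - v⟫ = (1 / lam) * ⟪v - zstar, w - v⟫ := by
        rw [hg]; exact real_inner_smul_left _ _ _
      have hip2 : ⟪v - zstar, w - v⟫ = - ⟪zstar - v, w - v⟫ := by
        rw [← inner_neg_left]; congr 1; abel
      rw [hev, hnorm, hipg, hip2]
      field_simp
      ring
    calc moreau lam f w ≤ f zstar + ((1 / (2 * lam) * ‖zstar - w‖ ^ 2 : ℝ) : EReal) := h1
      _ = ((M + 1 / (2 * lam) * ‖zstar - w‖ ^ 2 : ℝ) : EReal) := by
          rw [hMeq, ← EReal.coe_add]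
      _ = _ := by rw [heq]
  -- lower bound
  have hlower : ∀ w, ((ev + ⟪g, w - v⟫ : ℝ) : EReal) ≤ moreau lam f w := by
    intro w
    apply le_iInf
    intro z
    by_cases hz : f z = ⊤
    · rw [hz, EReal.top_add_coe]; exact le_top
    · set F : ℝ := (f z).toReal with hF
      have hFeq : f z = (F : EReal) := (EReal.coe_toReal hz (hne_bot z)).symm
      rw [hFeq, ← EReal.coe_add, EReal.coe_le_coe_iff]
      have h1 := hsub z hz
      rw [← hF] at h1
      have hvec : z - w = (z - zstar - (w - v)) - (v - zstar) := by module
      have hnorm : ‖z - w‖ ^ 2 = ‖z - zstar - (w - v)‖ ^ 2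
          - 2 * ⟪z - zstar - (w - v), v - zstar⟫ + ‖v - zstar‖ ^ 2 := by
        rw [hvec, norm_sub_sq_real]
      have hip1 : ⟪z - zstar - (w - v), v - zstar⟫
          = ⟪v - zstar, z - zstar⟫ - ⟪v - zstar, w - v⟫ := by
        rw [inner_sub_left, real_inner_comm (z - zstar) (v - zstar),
          real_inner_comm (w - v) (v - zstar)]
      have hipg2 : ⟪g, w - v⟫ = (1 / lam) * ⟪v - zstar, w - v⟫ := by
        rw [hg]; exact real_inner_smul_left _ _ _
      have hns : ‖zstar - v‖ ^ 2 = ‖v - zstar‖ ^ 2 := by rw [norm_sub_rev]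
      have hsq : (0:ℝ) ≤ ‖z - zstar - (w - v)‖ ^ 2 := by positivity
      have h3 : 2 * lam * (ev + ⟪g, w - v⟫) ≤ 2 * lam * (F + 1 / (2 * lam) * ‖z - w‖ ^ 2) := by
        have e1 : 2 * lam * (ev + ⟪g, w - v⟫)
            = 2 * lam * M + ‖v - zstar‖ ^ 2 + 2 * ⟪v - zstar, w - v⟫ := by
          rw [hev, hipg2, hns]; field_simp
        have e2 : 2 * lam * (F + 1 / (2 * lam) * ‖z - w‖ ^ 2)
            = 2 * lam * F + ‖z - w‖ ^ 2 := by
          field_simp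
        rw [e1, e2, hnorm, hip1]
        linarith [h1, hsq]
      exact le_of_mul_le_mul_left h3 h2
  -- finiteness and real-valued bounds
  have hEbound : ∀ w, |(moreau lam f w).toReal - (ev + ⟪g, w - v⟫)|
      ≤ 1 / (2 * lam) * ‖w - v‖ ^ 2 := by
    intro w
    have hlo := hlower w
    have hup := hupper w
    have hnbot : moreau lam f w ≠ ⊥ := fun h => by
      rw [h] at hlo; exact absurd (le_bot_iff.mp hlo) (EReal.coe_ne_bot _)
    have hntop : moreau lam f w ≠ ⊤ := fun h => by
      rw [h] at hup; exact absurd (top_le_iff.mp hup) (EReal.coe_ne_top _)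
    have hlo' : ev + ⟪g, w - v⟫ ≤ (moreau lam f w).toReal := by
      have := EReal.toReal_le_toReal hlo (EReal.coe_ne_bot _) hntop
      rwa [EReal.toReal_coe] at this
    have hup' : (moreau lam f w).toReal ≤ ev + ⟪g, w - v⟫ + 1 / (2 * lam) * ‖w - v‖ ^ 2 := by
      have := EReal.toReal_le_toReal hup hnbot (EReal.coe_ne_top _)
      rwa [EReal.toReal_coe] at this
    rw [abs_le]
    constructor
    · have : (0:ℝ) ≤ 1 / (2 * lam) * ‖w - v‖ ^ 2 := by positivity
      linarith
    · linarith
  have hEv : (moreau lam f v).toReal = ev := by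
    have h := hEbound v
    simp at h
    linarith [h]
  -- conclude
  rw [hasGradientAt_iff_isLittleO]
  have hO : (fun w => (moreau lam f w).toReal - (moreau lam f v).toReal - ⟪g, w - v⟫)
      =O[nhds v] fun w => ‖w - v‖ ^ 2 := by
    apply Asymptotics.IsBigO.of_bound (1 / (2 * lam))
    filter_upwards with w
    rw [hEv]
    have hb := hEbound w
    rw [Real.norm_eq_abs, Real.norm_eq_abs, abs_pow, abs_norm]
    calc |(moreau lam f w).toReal - ev - ⟪g, w - v⟫|
        = |(moreau lam f w).toReal - (ev + ⟪g, w - v⟫)| := by ring_nf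
      _ ≤ 1 / (2 * lam) * ‖w - v‖ ^ 2 := hb
  have ho : (fun w : EuclideanSpace ℝ (Fin m) => ‖w - v‖ ^ 2)
      =o[nhds v] fun w => w - v := by
    rw [Asymptotics.isLittleO_iff]
    intro c hc
    have hev2 : ∀ᶠ w : EuclideanSpace ℝ (Fin m) in nhds v, ‖w - v‖ < c :=
      (tendsto_norm_sub_self v).eventually_lt_const hc
    filter_upwards [hev2] with w hw
    rw [Real.norm_eq_abs, abs_pow, abs_norm, pow_two]
    exact mul_le_mul hw.le le_rfl (norm_nonneg _) hc.le
  exact hO.trans_isLittleO ho
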